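/- arXiv:2601.04559 — 3 statements merged into one kernel-verified Lean document; each statement's English description precedes it below -/
import Mathlib

section
/- Let G be a consistently oriented weighted cycle graph on vertices ℤ/nℤ (finite-weight edges only from i to i+1 mod n, with positive weights), let P(G) be its path completion with shortest path distance ω, and let δ > 0. If σ = [x₁, …, x_k] is a simplex of the Dowker source complex of P(G) at parameter δ (i.e., some vertex v satisfies ω(v, xᵢ) ≤ δ for all i), then there is a vertex x_j ∈ σ with ω(x_j, x_i) ≤ δ for all i; consequently, for every pair x_i, x_j in σ, at least one of ω(x_i, x_j) ≤ δ or ω(x_j, x_i) ≤ δ holds. -/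
open scoped ENNReal

noncomputable def pathWeight {X : Type*} (ω : X → X → ℝ≥0∞) : List X → ℝ≥0∞
  | [] => 0
  | [_] => 0
  | a :: b :: t => ω a b + pathWeight ω (b :: t)

noncomputable def spd {X : Type*} (ω : X → X → ℝ≥0∞) (x y : X) : ℝ≥0∞ :=
  ⨅ p : {l : List X // l.head? = some x ∧ l.getLast? = some y}, pathWeight ω p.1

open Fin.NatCast Fin.CommRing

/-- Partial sums of weights around the cycle, starting at `a`, `m` steps. -/
noncomputable def cycS {n : ℕ} [NeZero n] (w : Fin n → ℝ≥0∞) (a : Fin n) (m : ℕ) : ℝ≥0∞ :=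
  ∑ k ∈ Finset.range m, w (a + (k : Fin n))

lemma cycS_succ {n : ℕ} [NeZero n] (w : Fin n → ℝ≥0∞) (a : Fin n) (m : ℕ) :
    cycS w a (m + 1) = w a + cycS w (a + 1) m := by
  unfold cycS
  rw [Finset.sum_range_succ']
  simp only [Nat.cast_zero, add_zero, Nat.cast_add, Nat.cast_one]
  rw [add_comm]
  congr 1
  apply Finset.sum_congr rfl
  intro k _
  congr 1
  ring

lemma fin_val_sub {n : ℕ} [NeZero n] {a b : Fin n} (h : a.val ≤ b.val) :
    (b - a).val = b.val - a.val := by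
  rw [Fin.sub_def]
  have ha := a.isLt
  have hb := b.isLt
  simp only
  have h1 : n - a.val + b.val = (b.val - a.val) + n := by omega
  rw [h1, Nat.add_mod_right, Nat.mod_eq_of_lt (by omega)]

lemma cycS_add {n : ℕ} [NeZero n] (w : Fin n → ℝ≥0∞) (v : Fin n) (a m : ℕ) :
    cycS w v (a + m) = cycS w v a + cycS w (v + (a : Fin n)) m := by
  unfold cycS
  rw [Finset.sum_range_add]
  congr 1
  apply Finset.sum_congr rfl
  intro k _
  congr 1
  push_cast
  ring

lemma cycS_rec {n : ℕ} [NeZero n] (w : Fin n → ℝ≥0∞) {a y : Fin n} (h : y ≠ a) :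
    cycS w a ((y - a).val) = w a + cycS w (a + 1) ((y - (a + 1)).val) := by
  rcases eq_or_lt_of_le (Nat.one_le_iff_ne_zero.mpr (NeZero.ne n)) with hn | hn
  · exfalso
    apply h
    have : Subsingleton (Fin n) := by rw [← hn]; infer_instance
    exact Subsingleton.elim y a
  have hone : (1 : Fin n).val = 1 := by
    simp [Nat.mod_eq_of_lt hn]
  have hne : y - a ≠ 0 := sub_ne_zero.mpr h
  have h1 : (y - a).val ≠ 0 := fun h0 => hne (Fin.ext h0)
  have h2 : y - (a + 1) = (y - a) - 1 := by ring
  have h3 : ((y - a) - 1).val = (y - a).val - 1 := by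
    rw [fin_val_sub (by omega), hone]
  rw [h2, h3]
  have h5 : (y - a).val - 1 + 1 = (y - a).val := by omega
  conv_lhs => rw [← h5]
  rw [cycS_succ]

/-- Lower bound: every path from `x` to `y` weighs at least the cycle sum. -/
lemma cycS_le_pathWeight {n : ℕ} [NeZero n] (w : Fin n → ℝ≥0∞)
    (ω : Fin n → Fin n → ℝ≥0∞)
    (hω : ∀ i j : Fin n, ω i j = if j = i then 0 else if j = i + 1 then w i else ⊤) :
    ∀ (l : List (Fin n)) (x y : Fin n), l.head? = some x → l.getLast? = some y →
      cycS w x ((y - x).val) ≤ pathWeight ω l := by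
  intro l
  induction l with
  | nil => intro x y hx _; simp at hx
  | cons a t ih =>
    intro x y hx hy
    simp only [List.head?_cons, Option.some.injEq] at hx
    subst hx
    match t with
    | [] =>
      simp only [List.getLast?_singleton, Option.some.injEq] at hy
      subst hy
      simp [cycS, pathWeight]
    | b :: t' =>
      rw [List.getLast?_cons_cons] at hy
      have hrec := ih b y (by simp) hy
      show cycS w a ((y - a).val) ≤ ω a b + pathWeight ω (b :: t')
      rw [hω]
      split_ifs with h1 h2
      · subst h1; simpa using hrec
      · subst h2
        by_cases hy0 : y = a
        · subst hy0; simp [cycS]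
        · rw [cycS_rec w hy0]
          exact add_le_add_right hrec _
      · simp

/-- Upper bound: there is a path from `x` to `x + m` of weight at most the cycle sum. -/
lemma exists_path_le {n : ℕ} [NeZero n] (w : Fin n → ℝ≥0∞)
    (ω : Fin n → Fin n → ℝ≥0∞)
    (hω : ∀ i j : Fin n, ω i j = if j = i then 0 else if j = i + 1 then w i else ⊤) :
    ∀ (m : ℕ) (x : Fin n), ∃ l : List (Fin n),
      l.head? = some x ∧ l.getLast? = some (x + (m : Fin n)) ∧
      pathWeight ω l ≤ cycS w x m := by
  intro m
  induction m with
  | zero => intro x; exact ⟨[x], by simp, by simp, by simp [pathWeight, cycS]⟩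
  | succ m ih =>
    intro x
    obtain ⟨l, hl1, hl2, hl3⟩ := ih (x + 1)
    match l, hl1 with
    | b :: t, hl1 =>
      simp only [List.head?_cons, Option.some.injEq] at hl1
      subst hl1
      refine ⟨x :: (x + 1) :: t, by simp, ?_, ?_⟩
      · rw [List.getLast?_cons_cons]
        rw [hl2]
        congr 1
        push_cast
        ring
      · show ω x (x + 1) + pathWeight ω ((x + 1) :: t) ≤ cycS w x (m + 1)
        rw [cycS_succ]
        apply add_le_add _ hl3
        rw [hω]
        split_ifs with h1 h2
        · exact zero_le
        · exact le_refl _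
        · exact absurd rfl h2

lemma spd_le_cycS {n : ℕ} [NeZero n] (w : Fin n → ℝ≥0∞)
    (ω : Fin n → Fin n → ℝ≥0∞)
    (hω : ∀ i j : Fin n, ω i j = if j = i then 0 else if j = i + 1 then w i else ⊤)
    (x y : Fin n) : spd ω x y ≤ cycS w x ((y - x).val) := by
  obtain ⟨l, hl1, hl2, hl3⟩ := exists_path_le w ω hω ((y - x).val) x
  rw [Fin.cast_val_eq_self, add_sub_cancel] at hl2
  exact le_trans (iInf_le _ ⟨l, hl1, hl2⟩) hl3

lemma cycS_le_spd {n : ℕ} [NeZero n] (w : Fin n → ℝ≥0∞)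
    (ω : Fin n → Fin n → ℝ≥0∞)
    (hω : ∀ i j : Fin n, ω i j = if j = i then 0 else if j = i + 1 then w i else ⊤)
    (x y : Fin n) : cycS w x ((y - x).val) ≤ spd ω x y := by
  apply le_iInf
  rintro ⟨l, hl1, hl2⟩
  exact cycS_le_pathWeight w ω hω l x y hl1 hl2

/-- Key lemma: if `j` lies (cyclically from `v`) before `i`, then `spd j i ≤ spd v i`. -/
lemma spd_key {n : ℕ} [NeZero n] (w : Fin n → ℝ≥0∞)
    (ω : Fin n → Fin n → ℝ≥0∞)
    (hω : ∀ i j : Fin n, ω i j = if j = i then 0 else if j = i + 1 then w i else ⊤)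
    (v i j : Fin n) (h : (j - v).val ≤ (i - v).val) :
    spd ω j i ≤ spd ω v i := by
  set a := (j - v).val with ha
  set b := (i - v).val with hb
  have hj : j = v + (a : Fin n) := by rw [ha, Fin.cast_val_eq_self, add_sub_cancel]
  have hij : (i - j).val = b - a := by
    have : i - j = (i - v) - (j - v) := by ring
    rw [this, fin_val_sub h]
  calc spd ω j i ≤ cycS w j ((i - j).val) := spd_le_cycS w ω hω j i
    _ ≤ cycS w v a + cycS w j (b - a) := by rw [hij]; exact le_add_self
    _ = cycS w v b := by
        rw [hj, ← cycS_add]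
        congr 1
        omega
    _ ≤ spd ω v i := cycS_le_spd w ω hω v i

/-- In a consistently oriented weighted cycle graph, every simplex of the Dowker
source complex of the path completion at parameter δ has a vertex seeing all its
other vertices within δ; consequently every pair of its vertices sees one another
in at least one direction within δ. -/
theorem cycle_simplex_has_ordering_vertex {n : ℕ} [NeZero n]
    (w : Fin n → ℝ≥0∞) (hw : ∀ i, 0 < w i ∧ w i < ⊤)
    (ω : Fin n → Fin n → ℝ≥0∞)
    (hω : ∀ i j : Fin n, ω i j = if j = i then 0 else if j = i + 1 then w i else ⊤)
    (δ : ℝ≥0∞) (hδ : 0 < δ)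
    (σ : Finset (Fin n)) (hσ : σ.Nonempty)
    (hsimp : ∃ v : Fin n, ∀ x ∈ σ, spd ω v x ≤ δ) :
    (∃ j ∈ σ, ∀ i ∈ σ, spd ω j i ≤ δ) ∧
      ∀ i ∈ σ, ∀ j ∈ σ, spd ω i j ≤ δ ∨ spd ω j i ≤ δ := by
  obtain ⟨v, hv⟩ := hsimp
  constructor
  · obtain ⟨j, hjσ, hjmin⟩ := σ.exists_min_image (fun x => (x - v).val) hσ
    exact ⟨j, hjσ, fun i hi =>
      le_trans (spd_key w ω hω v i j (hjmin i hi)) (hv i hi)⟩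
  · intro i hi j hj
    rcases le_total ((i - v).val) ((j - v).val) with h | h
    · exact Or.inl (le_trans (spd_key w ω hω v j i h) (hv j hj))
    · exact Or.inr (le_trans (spd_key w ω hω v i j h) (hv i hi))
end

section
/- Let G₁ = (X₁, ω₁) and G₂ = (X₂, ω₂) be finite weighted digraphs with distinguished vertices x₀ ∈ X₁ and y₀ ∈ X₂, and form the wedge sum graph G₁ ∨ G₂ by identifying x₀ and y₀. Then every maximal simplex of the closure A of the set-difference 𝔇^⋆_δ(P(G₁ ∨ G₂)) \ 𝔇^⋆_δ(P(G₁) ∨ P(G₂)) contains the wedge point x₀. (Here 𝔇^⋆_δ denotes the Dowker source complex at parameter δ.) -/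
open scoped ENNReal

section auxlemmas
variable {X : Type*} (ω : X → X → ℝ≥0∞)

lemma spd_le_pathWeight {x y : X} {l : List X} (h1 : l.head? = some x)
    (h2 : l.getLast? = some y) : spd ω x y ≤ pathWeight ω l :=
  iInf_le (fun p : {l : List X // l.head? = some x ∧ l.getLast? = some y} =>
    pathWeight ω p.1) ⟨l, h1, h2⟩

lemma le_spd {x y : X} {c : ℝ≥0∞}
    (h : ∀ l : List X, l.head? = some x → l.getLast? = some y → c ≤ pathWeight ω l) :
    c ≤ spd ω x y :=
  le_iInf fun p => h p.1 p.2.1 p.2.2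

lemma spd_self_le (x : X) : spd ω x x ≤ 0 := by
  have := spd_le_pathWeight ω (l := [x]) rfl rfl
  simpa [pathWeight] using this

lemma spd_le_weight (x y : X) : spd ω x y ≤ ω x y := by
  have := spd_le_pathWeight ω (l := [x, y]) rfl rfl
  simpa [pathWeight] using this

lemma spd_triangle_edge (v u y : X) : spd ω v y ≤ ω v u + spd ω u y := by
  unfold spd
  rw [ENNReal.add_iInf]
  refine le_iInf fun p => ?_
  obtain ⟨l, h1, h2⟩ := p
  cases l with
  | nil => simp at h1
  | cons u' t =>
    have hu : ω v u = ω v u' := by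
      have : u' = u := by simpa using h1
      rw [this]
    rw [hu]
    exact iInf_le_of_le ⟨v :: u' :: t, rfl,
      by simpa [List.getLast?_cons_cons] using h2⟩ le_rfl
end auxlemmas

noncomputable def wedgeWeight {X₁ X₂ : Type*} [DecidableEq X₁] (x₀ : X₁) (y₀ : X₂)
    (μ₁ : X₁ → X₁ → ℝ≥0∞) (μ₂ : X₂ → X₂ → ℝ≥0∞) :
    (X₁ ⊕ {y : X₂ // y ≠ y₀}) → (X₁ ⊕ {y : X₂ // y ≠ y₀}) → ℝ≥0∞
  | Sum.inl a, Sum.inl b => μ₁ a b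
  | Sum.inl a, Sum.inr b => if a = x₀ then μ₂ y₀ b.1 else ⊤
  | Sum.inr a, Sum.inl b => if b = x₀ then μ₂ a.1 y₀ else ⊤
  | Sum.inr a, Sum.inr b => μ₂ a.1 b.1

section wedge
variable {X₁ X₂ : Type*} [DecidableEq X₁] (x₀ : X₁) (y₀ : X₂)
  (ω₁ : X₁ → X₁ → ℝ≥0∞) (ω₂ : X₂ → X₂ → ℝ≥0∞)


lemma proj_left (b : X₁) :
    ∀ p : List (X₁ ⊕ {y : X₂ // y ≠ y₀}), p.getLast? = some (Sum.inl b) →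
      (∀ a, p.head? = some (Sum.inl a) →
        spd ω₁ a b ≤ pathWeight (wedgeWeight x₀ y₀ ω₁ ω₂) p) ∧
      (∀ c, p.head? = some (Sum.inr c) →
        spd ω₁ x₀ b ≤ pathWeight (wedgeWeight x₀ y₀ ω₁ ω₂) p) := by
  intro p
  induction p with
  | nil => intro h; simp at h
  | cons s t ih =>
    intro hlast
    cases t with
    | nil =>
      cases s with
      | inl a =>
        have hb : a = b := by simpa using hlast
        subst hb
        constructor
        · intro a' ha'
          obtain rfl : a = a' := by simpa using ha'
          simpa [pathWeight] using spd_self_le ω₁ a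
        · intro c hc; simp at hc
      | inr a => simp at hlast
    | cons s' t' =>
      have hlast' : (s' :: t').getLast? = some (Sum.inl b) := by
        simpa [List.getLast?_cons_cons] using hlast
      have ih' := ih hlast'
      have hW : pathWeight (wedgeWeight x₀ y₀ ω₁ ω₂) (s :: s' :: t') =
          wedgeWeight x₀ y₀ ω₁ ω₂ s s' +
            pathWeight (wedgeWeight x₀ y₀ ω₁ ω₂) (s' :: t') := rfl
      constructor
      · intro a ha
        have hs : s = Sum.inl a := by simpa using ha
        subst hs
        rw [hW]
        cases s' with
        | inl c =>
          have h1 := ih'.1 c rfl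
          calc spd ω₁ a b ≤ ω₁ a c + spd ω₁ c b := spd_triangle_edge ω₁ a c b
            _ ≤ _ := by
              simp only [wedgeWeight]
              exact add_le_add le_rfl h1
        | inr c =>
          simp only [wedgeWeight]
          split
          · next h =>
            subst h
            exact le_trans (ih'.2 c rfl) le_add_self
          · simp
      · intro c hc
        have hs : s = Sum.inr c := by simpa using hc
        subst hs
        rw [hW]
        cases s' with
        | inl d =>
          simp only [wedgeWeight]
          split
          · next h =>
            subst h
            exact le_trans (ih'.1 d rfl) le_add_self
          · simp
        | inr d =>
          exact le_trans (ih'.2 d rfl) le_add_self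

lemma proj_right (b : {y : X₂ // y ≠ y₀}) :
    ∀ p : List (X₁ ⊕ {y : X₂ // y ≠ y₀}), p.getLast? = some (Sum.inr b) →
      (∀ a, p.head? = some (Sum.inr a) →
        spd ω₂ a.1 b.1 ≤ pathWeight (wedgeWeight x₀ y₀ ω₁ ω₂) p) ∧
      (∀ c, p.head? = some (Sum.inl c) →
        spd ω₂ y₀ b.1 ≤ pathWeight (wedgeWeight x₀ y₀ ω₁ ω₂) p) := by
  intro p
  induction p with
  | nil => intro h; simp at h
  | cons s t ih =>
    intro hlast
    cases t with
    | nil =>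
      cases s with
      | inr a =>
        have hb : a = b := by simpa using hlast
        subst hb
        constructor
        · intro a' ha'
          obtain rfl : a = a' := by simpa using ha'
          simpa [pathWeight] using spd_self_le ω₂ a.1
        · intro c hc; simp at hc
      | inl a => simp at hlast
    | cons s' t' =>
      have hlast' : (s' :: t').getLast? = some (Sum.inr b) := by
        simpa [List.getLast?_cons_cons] using hlast
      have ih' := ih hlast'
      have hW : pathWeight (wedgeWeight x₀ y₀ ω₁ ω₂) (s :: s' :: t') =
          wedgeWeight x₀ y₀ ω₁ ω₂ s s' +
            pathWeight (wedgeWeight x₀ y₀ ω₁ ω₂) (s' :: t') := rfl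
      constructor
      · intro a ha
        have hs : s = Sum.inr a := by simpa using ha
        subst hs
        rw [hW]
        cases s' with
        | inr c =>
          have h1 := ih'.1 c rfl
          calc spd ω₂ a.1 b.1 ≤ ω₂ a.1 c.1 + spd ω₂ c.1 b.1 :=
                spd_triangle_edge ω₂ a.1 c.1 b.1
            _ ≤ _ := by
              simp only [wedgeWeight]
              exact add_le_add le_rfl h1
        | inl c =>
          simp only [wedgeWeight]
          split
          · next h =>
            have h1 := ih'.2 c rfl
            calc spd ω₂ a.1 b.1 ≤ ω₂ a.1 y₀ + spd ω₂ y₀ b.1 :=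
                  spd_triangle_edge ω₂ a.1 y₀ b.1
              _ ≤ _ := add_le_add le_rfl h1
          · simp
      · intro c hc
        have hs : s = Sum.inl c := by simpa using hc
        subst hs
        rw [hW]
        cases s' with
        | inl d =>
          exact le_trans (ih'.2 d rfl) le_add_self
        | inr d =>
          simp only [wedgeWeight]
          split
          · next h =>
            have h1 := ih'.1 d rfl
            calc spd ω₂ y₀ b.1 ≤ ω₂ y₀ d.1 + spd ω₂ d.1 b.1 :=
                  spd_triangle_edge ω₂ y₀ d.1 b.1
              _ ≤ _ := add_le_add le_rfl h1
          · simp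

/-- crossing left→right : any path from `inl a` to `inr b` passes through `inl x₀`. -/
lemma cross_lr (b : {y : X₂ // y ≠ y₀}) :
    ∀ p : List (X₁ ⊕ {y : X₂ // y ≠ y₀}), p.getLast? = some (Sum.inr b) →
      ∀ a, p.head? = some (Sum.inl a) →
        spd (wedgeWeight x₀ y₀ ω₁ ω₂) (Sum.inl a) (Sum.inl x₀) ≤
          pathWeight (wedgeWeight x₀ y₀ ω₁ ω₂) p := by
  intro p
  induction p with
  | nil => intro h; simp at h
  | cons s t ih =>
    intro hlast a ha
    have hs : s = Sum.inl a := by simpa using ha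
    subst hs
    cases t with
    | nil => simp at hlast
    | cons s' t' =>
      have hlast' : (s' :: t').getLast? = some (Sum.inr b) := by
        simpa [List.getLast?_cons_cons] using hlast
      have hW : pathWeight (wedgeWeight x₀ y₀ ω₁ ω₂) (Sum.inl a :: s' :: t') =
          wedgeWeight x₀ y₀ ω₁ ω₂ (Sum.inl a) s' +
            pathWeight (wedgeWeight x₀ y₀ ω₁ ω₂) (s' :: t') := rfl
      rw [hW]
      cases s' with
      | inl c =>
        have h1 := ih hlast' c rfl
        calc spd (wedgeWeight x₀ y₀ ω₁ ω₂) (Sum.inl a) (Sum.inl x₀) ≤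
              wedgeWeight x₀ y₀ ω₁ ω₂ (Sum.inl a) (Sum.inl c) +
                spd (wedgeWeight x₀ y₀ ω₁ ω₂) (Sum.inl c) (Sum.inl x₀) :=
              spd_triangle_edge _ _ _ _
          _ ≤ _ := add_le_add le_rfl h1
      | inr c =>
        simp only [wedgeWeight]
        split
        · next h =>
          subst h
          exact le_trans (spd_self_le _ _) zero_le
        · simp

/-- crossing right→left : any path from `inr a` to `inl b` passes through `inl x₀`. -/
lemma cross_rl (b : X₁) :
    ∀ p : List (X₁ ⊕ {y : X₂ // y ≠ y₀}), p.getLast? = some (Sum.inl b) →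
      ∀ a, p.head? = some (Sum.inr a) →
        spd (wedgeWeight x₀ y₀ ω₁ ω₂) (Sum.inr a) (Sum.inl x₀) ≤
          pathWeight (wedgeWeight x₀ y₀ ω₁ ω₂) p := by
  intro p
  induction p with
  | nil => intro h; simp at h
  | cons s t ih =>
    intro hlast a ha
    have hs : s = Sum.inr a := by simpa using ha
    subst hs
    cases t with
    | nil => simp at hlast
    | cons s' t' =>
      have hlast' : (s' :: t').getLast? = some (Sum.inl b) := by
        simpa [List.getLast?_cons_cons] using hlast
      have hW : pathWeight (wedgeWeight x₀ y₀ ω₁ ω₂) (Sum.inr a :: s' :: t') =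
          wedgeWeight x₀ y₀ ω₁ ω₂ (Sum.inr a) s' +
            pathWeight (wedgeWeight x₀ y₀ ω₁ ω₂) (s' :: t') := rfl
      rw [hW]
      cases s' with
      | inl c =>
        by_cases hc : c = x₀
        · subst hc
          refine le_trans (spd_le_weight _ _ _) le_self_add
        · simp only [wedgeWeight, if_neg hc]
          simp
      | inr c =>
        have h1 := ih hlast' c rfl
        calc spd (wedgeWeight x₀ y₀ ω₁ ω₂) (Sum.inr a) (Sum.inl x₀) ≤
              wedgeWeight x₀ y₀ ω₁ ω₂ (Sum.inr a) (Sum.inr c) +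
                spd (wedgeWeight x₀ y₀ ω₁ ω₂) (Sum.inr c) (Sum.inl x₀) :=
              spd_triangle_edge _ _ _ _
          _ ≤ _ := add_le_add le_rfl h1

end wedge

/-- Every maximal simplex of the closure A of the set difference
𝔇⋆_δ(P(G₁ ∨ G₂)) \ 𝔇⋆_δ(P(G₁) ∨ P(G₂)) contains the wedge point x₀. -/
theorem wedge_difference_maximal_simplices_contain_wedge_point
    {X₁ X₂ : Type*} [Fintype X₁] [Fintype X₂] [DecidableEq X₁] [DecidableEq X₂]
    (ω₁ : X₁ → X₁ → ℝ≥0∞) (ω₂ : X₂ → X₂ → ℝ≥0∞) (x₀ : X₁) (y₀ : X₂) (δ : ℝ≥0∞)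
    (dowkerWedge dowkerOfCompletions A : Set (Finset (X₁ ⊕ {y : X₂ // y ≠ y₀})))
    (hDW : dowkerWedge =
      {σ | σ.Nonempty ∧ ∃ v, ∀ x ∈ σ, spd (wedgeWeight x₀ y₀ ω₁ ω₂) v x ≤ δ})
    (hDC : dowkerOfCompletions =
      {σ | σ.Nonempty ∧ ∃ v, ∀ x ∈ σ, wedgeWeight x₀ y₀ (spd ω₁) (spd ω₂) v x ≤ δ})
    (hA : A = {τ | τ.Nonempty ∧
      ∃ σ, σ ∈ dowkerWedge ∧ σ ∉ dowkerOfCompletions ∧ τ ⊆ σ}) :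
    ∀ σ ∈ A, (∀ τ ∈ A, σ ⊆ τ → τ = σ) → Sum.inl x₀ ∈ σ := by
  subst hDW hDC hA
  intro σ hσ hmax
  obtain ⟨hσne, σ', ⟨hσ'ne, v, hv⟩, hσ'nc, hsub⟩ := hσ
  -- from σ' ∉ DC, find the bad vertex for witness v
  have hbad : ∃ x ∈ σ', ¬ wedgeWeight x₀ y₀ (spd ω₁) (spd ω₂) v x ≤ δ := by
    by_contra h
    push_neg at h
    exact hσ'nc ⟨hσ'ne, v, h⟩
  obtain ⟨x, hxσ', hx⟩ := hbad
  have hvx : spd (wedgeWeight x₀ y₀ ω₁ ω₂) v x ≤ δ := hv x hxσ'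
  -- key : spd wedge v (inl x₀) ≤ δ
  have key : spd (wedgeWeight x₀ y₀ ω₁ ω₂) v (Sum.inl x₀) ≤ δ := by
    cases v with
    | inl a =>
      cases x with
      | inl b =>
        exfalso
        apply hx
        have : spd ω₁ a b ≤ spd (wedgeWeight x₀ y₀ ω₁ ω₂) (Sum.inl a) (Sum.inl b) := by
          apply le_spd
          intro l h1 h2
          exact (proj_left x₀ y₀ ω₁ ω₂ b l h2).1 a h1
        simpa [wedgeWeight] using le_trans this hvx
      | inr b =>
        have : spd (wedgeWeight x₀ y₀ ω₁ ω₂) (Sum.inl a) (Sum.inl x₀) ≤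
            spd (wedgeWeight x₀ y₀ ω₁ ω₂) (Sum.inl a) (Sum.inr b) := by
          apply le_spd
          intro l h1 h2
          exact cross_lr x₀ y₀ ω₁ ω₂ b l h2 a h1
        exact le_trans this hvx
    | inr a =>
      cases x with
      | inl b =>
        have : spd (wedgeWeight x₀ y₀ ω₁ ω₂) (Sum.inr a) (Sum.inl x₀) ≤
            spd (wedgeWeight x₀ y₀ ω₁ ω₂) (Sum.inr a) (Sum.inl b) := by
          apply le_spd
          intro l h1 h2
          exact cross_rl x₀ y₀ ω₁ ω₂ b l h2 a h1
        exact le_trans this hvx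
      | inr b =>
        exfalso
        apply hx
        have : spd ω₂ a.1 b.1 ≤
            spd (wedgeWeight x₀ y₀ ω₁ ω₂) (Sum.inr a) (Sum.inr b) := by
          apply le_spd
          intro l h1 h2
          exact (proj_right x₀ y₀ ω₁ ω₂ b l h2).1 a h1
        simpa [wedgeWeight] using le_trans this hvx
  -- insert the wedge point
  set τ' : Finset (X₁ ⊕ {y : X₂ // y ≠ y₀}) := insert (Sum.inl x₀) σ' with hτ'
  have hτ'DW : τ'.Nonempty ∧ ∃ w, ∀ x ∈ τ', spd (wedgeWeight x₀ y₀ ω₁ ω₂) w x ≤ δ := by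
    refine ⟨Finset.insert_nonempty _ _, v, ?_⟩
    intro z hz
    rcases Finset.mem_insert.mp hz with h | h
    · subst h; exact key
    · exact hv z h
  have hτ'nc : ¬ (τ'.Nonempty ∧ ∃ w, ∀ x ∈ τ',
      wedgeWeight x₀ y₀ (spd ω₁) (spd ω₂) w x ≤ δ) := by
    rintro ⟨-, w, hw⟩
    exact hσ'nc ⟨hσ'ne, w, fun z hz => hw z (Finset.mem_insert_of_mem hz)⟩
  have hτA : (insert (Sum.inl x₀) σ : Finset _) ∈
      {τ : Finset (X₁ ⊕ {y : X₂ // y ≠ y₀}) | τ.Nonempty ∧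
        ∃ σ, σ ∈ {σ : Finset (X₁ ⊕ {y : X₂ // y ≠ y₀}) | σ.Nonempty ∧
            ∃ v, ∀ x ∈ σ, spd (wedgeWeight x₀ y₀ ω₁ ω₂) v x ≤ δ} ∧
          σ ∉ {σ : Finset (X₁ ⊕ {y : X₂ // y ≠ y₀}) | σ.Nonempty ∧
            ∃ v, ∀ x ∈ σ, wedgeWeight x₀ y₀ (spd ω₁) (spd ω₂) v x ≤ δ} ∧
          τ ⊆ σ} := by
    refine ⟨Finset.insert_nonempty _ _, τ', hτ'DW, hτ'nc, ?_⟩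
    exact Finset.insert_subset_insert _ hsub
  have := hmax _ hτA (Finset.subset_insert _ _)
  rw [← this]
  exact Finset.mem_insert_self _ _
end

section
/- Let G be a finite digraph that is a disjoint union of directed path graphs, π a partition of its vertices, and h a set of directed paths in G whose vertices meet every cell of π. If |h| = k > 1, then the path completion of the quotient graph G^π admits a source dominating set of size at most k, and therefore its maximal Dowker source complex has trivial reduced homology in all dimensions ≥ k − 1. -/
noncomputable section AuxDowker

open Finsupp

/-- The edge relation of the quotient graph of a digraph with edge relation E under
a vertex partition given by a setoid. -/
def quotientEdgeRel {X : Type*} (E : X → X → Prop) (s : Setoid X)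
    (A B : Quotient s) : Prop :=
  A ≠ B ∧ ∃ a b : X, Quotient.mk s a = A ∧ Quotient.mk s b = B ∧ E a b

/-- The augmented simplicial boundary operator on real chains over the finite
subsets of a linearly ordered vertex set; "cycles are boundaries" expresses
triviality of *reduced* homology. -/
noncomputable def bdry {X : Type*} [LinearOrder X] (c : Finset X →₀ ℝ) : Finset X →₀ ℝ :=
  c.sum fun σ a =>
    a • ∑ x ∈ σ, Finsupp.single (σ.erase x) ((-1 : ℝ) ^ (σ.filter (fun y => y < x)).card)

variable {X : Type*} [LinearOrder X]

/-- sign of a vertex relative to a simplex -/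
def sgn (σ : Finset X) (x : X) : ℝ := (-1 : ℝ) ^ (σ.filter (fun y => y < x)).card

/-- boundary of a single simplex -/
def Bop (σ : Finset X) : Finset X →₀ ℝ :=
  ∑ x ∈ σ, Finsupp.single (σ.erase x) (sgn σ x)

/-- boundary as a linear map -/
def bdryHom : (Finset X →₀ ℝ) →ₗ[ℝ] (Finset X →₀ ℝ) :=
  Finsupp.lsum ℝ fun σ => LinearMap.toSpanSingleton ℝ _ (Bop σ)

lemma bdry_eq (c : Finset X →₀ ℝ) : bdry c = bdryHom c := by
  rw [bdry, bdryHom, Finsupp.lsum_apply]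
  refine Finsupp.sum_congr fun σ _ => ?_
  simp [LinearMap.toSpanSingleton_apply, Bop, sgn]

def coneVal (w : X) (σ : Finset X) : Finset X →₀ ℝ :=
  if w ∈ σ then 0 else Finsupp.single (insert w σ) (sgn σ w)

def coneHom (w : X) : (Finset X →₀ ℝ) →ₗ[ℝ] (Finset X →₀ ℝ) :=
  Finsupp.lsum ℝ fun σ => LinearMap.toSpanSingleton ℝ _ (coneVal w σ)

lemma bdryHom_single (σ : Finset X) (r : ℝ) :
    bdryHom (Finsupp.single σ r) = r • Bop σ := by
  simp [bdryHom, Finsupp.lsum_single, LinearMap.toSpanSingleton_apply]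

lemma coneHom_single (w : X) (σ : Finset X) (r : ℝ) :
    coneHom w (Finsupp.single σ r) = r • coneVal w σ := by
  simp [coneHom, Finsupp.lsum_single, LinearMap.toSpanSingleton_apply]

lemma sgn_sq (σ : Finset X) (x : X) : sgn σ x * sgn σ x = 1 := by
  rw [sgn, ← pow_add]
  exact Even.neg_one_pow ⟨_, rfl⟩

lemma sgn_erase_self (σ : Finset X) (w : X) : sgn (σ.erase w) w = sgn σ w := by
  unfold sgn
  rw [Finset.filter_erase, Finset.erase_eq_of_notMem (by simp)]

lemma sgn_insert_self {σ : Finset X} {w : X} (hw : w ∉ σ) :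
    sgn (insert w σ) w = sgn σ w := by
  unfold sgn
  rw [Finset.filter_insert, if_neg (lt_irrefl w)]

lemma sgn_insert {σ : Finset X} {w x : X} (hw : w ∉ σ) :
    sgn (insert w σ) x = (if w < x then -1 else 1) * sgn σ x := by
  unfold sgn
  rw [Finset.filter_insert]
  split
  · rw [Finset.card_insert_of_notMem (by simp [hw]), pow_succ]
    ring
  · ring

lemma sgn_erase {σ : Finset X} {x w : X} (hx : x ∈ σ) :
    sgn (σ.erase x) w = (if x < w then -1 else 1) * sgn σ w := by
  unfold sgn
  rw [Finset.filter_erase]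
  split
  · next h =>
    have hxf : x ∈ σ.filter (fun y => y < w) := Finset.mem_filter.2 ⟨hx, h⟩
    rw [Finset.card_erase_of_mem hxf]
    have hc : (σ.filter (fun y => y < w)).card =
        ((σ.filter (fun y => y < w)).card - 1) + 1 :=
      (Nat.succ_pred_eq_of_pos (Finset.card_pos.2 ⟨x, hxf⟩)).symm
    conv_rhs => rw [hc, pow_succ]
    ring
  · next h =>
    rw [Finset.erase_eq_of_notMem (by simp [h]), one_mul]

lemma eps_add {x w : X} (hxw : x ≠ w) :
    (if w < x then (-1:ℝ) else 1) + (if x < w then -1 else 1) = 0 := by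
  rcases lt_or_gt_of_ne hxw with hl | hl
  · rw [if_neg (asymm hl), if_pos hl]; ring
  · rw [if_pos hl, if_neg (asymm hl)]; ring

lemma cone_homotopy (w : X) :
    bdryHom ∘ₗ coneHom w + coneHom w ∘ₗ bdryHom
      = (LinearMap.id : (Finset X →₀ ℝ) →ₗ[ℝ] (Finset X →₀ ℝ)) := by
  apply Finsupp.lhom_ext
  intro σ r
  simp only [LinearMap.add_apply, LinearMap.comp_apply, LinearMap.id_apply,
    coneHom_single, bdryHom_single, map_smul]
  rw [← smul_add]
  suffices h : bdryHom (coneVal w σ) + coneHom w (Bop σ) = Finsupp.single σ 1 by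
    rw [h, Finsupp.smul_single, smul_eq_mul, mul_one]
  by_cases hw : w ∈ σ
  · rw [coneVal, if_pos hw, map_zero, zero_add, Bop, map_sum]
    rw [Finset.sum_eq_single_of_mem w hw]
    · rw [coneHom_single, coneVal, if_neg (Finset.notMem_erase w σ),
        Finset.insert_erase hw, sgn_erase_self, Finsupp.smul_single, smul_eq_mul, sgn_sq]
    · intro x hx hxw
      rw [coneHom_single, coneVal,
        if_pos (Finset.mem_erase.2 ⟨Ne.symm hxw, hw⟩), smul_zero]
  · -- w ∉ σ
    rw [coneVal, if_neg hw, bdryHom_single, Bop, Finset.sum_insert hw,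
      Finset.erase_insert hw, sgn_insert_self hw]
    rw [smul_add, Finsupp.smul_single, smul_eq_mul, sgn_sq, Finset.smul_sum]
    -- second part : coneHom w (Bop σ)
    rw [Bop, map_sum]
    have hterm : ∀ x ∈ σ,
        sgn σ w • Finsupp.single ((insert w σ).erase x) (sgn (insert w σ) x)
          + coneHom w (Finsupp.single (σ.erase x) (sgn σ x)) = 0 := by
      intro x hx
      have hxw : x ≠ w := fun h => hw (h ▸ hx)
      rw [coneHom_single, coneVal, if_neg (fun h => hw (Finset.erase_subset x σ h)),
        Finset.erase_insert_of_ne (Ne.symm hxw), Finsupp.smul_single, Finsupp.smul_single,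
        ← Finsupp.single_add]
      have h1 : sgn (insert w σ) x = (if w < x then -1 else 1) * sgn σ x := sgn_insert hw
      have h2 : sgn (σ.erase x) w = (if x < w then -1 else 1) * sgn σ w := sgn_erase hx
      rw [h1, h2, smul_eq_mul, smul_eq_mul]
      have : sgn σ w * ((if w < x then (-1:ℝ) else 1) * sgn σ x)
          + sgn σ x * ((if x < w then -1 else 1) * sgn σ w)
          = (sgn σ w * sgn σ x) * ((if w < x then (-1:ℝ) else 1) + (if x < w then -1 else 1)) := by
        ring
      rw [this, eps_add hxw, mul_zero, Finsupp.single_zero]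
    calc Finsupp.single σ 1 + ∑ x ∈ σ,
          sgn σ w • Finsupp.single ((insert w σ).erase x) (sgn (insert w σ) x)
        + ∑ x ∈ σ, coneHom w (Finsupp.single (σ.erase x) (sgn σ x))
        = Finsupp.single σ 1 + ∑ x ∈ σ,
            (sgn σ w • Finsupp.single ((insert w σ).erase x) (sgn (insert w σ) x)
              + coneHom w (Finsupp.single (σ.erase x) (sgn σ x))) := by
          rw [add_assoc, Finset.sum_add_distrib]
      _ = Finsupp.single σ 1 := by
          rw [Finset.sum_congr rfl hterm, Finset.sum_const_zero, add_zero]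

lemma bdry_bdry :
    (bdryHom ∘ₗ bdryHom : (Finset X →₀ ℝ) →ₗ[ℝ] (Finset X →₀ ℝ)) = 0 := by
  apply Finsupp.lhom_ext
  intro σ r
  simp only [LinearMap.comp_apply, bdryHom_single, map_smul, LinearMap.zero_apply]
  suffices h : bdryHom (Bop σ) = 0 by rw [h, smul_zero]
  rw [Bop, map_sum]
  have : ∀ x ∈ σ, bdryHom (Finsupp.single (σ.erase x) (sgn σ x))
      = ∑ y ∈ σ.erase x,
          Finsupp.single ((σ.erase x).erase y) (sgn σ x * sgn (σ.erase x) y) := by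
    intro x hx
    rw [bdryHom_single, Bop, Finset.smul_sum]
    refine Finset.sum_congr rfl fun y hy => ?_
    rw [Finsupp.smul_single, smul_eq_mul]
  rw [Finset.sum_congr rfl this, Finset.sum_sigma']
  refine Finset.sum_involution (fun p _ => ⟨p.2, p.1⟩) ?_ ?_ ?_ ?_
  · intro p hp
    obtain ⟨hp1, hp2⟩ := Finset.mem_sigma.1 hp
    have hne : p.2 ≠ p.1 := (Finset.mem_erase.1 hp2).1
    have hp2' : p.2 ∈ σ := Finset.erase_subset _ _ hp2
    rw [Finset.erase_right_comm (a := p.1) (b := p.2)]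
    rw [← Finsupp.single_add]
    have h1 : sgn (σ.erase p.1) p.2 = (if p.1 < p.2 then -1 else 1) * sgn σ p.2 :=
      sgn_erase hp1
    have h2 : sgn (σ.erase p.2) p.1 = (if p.2 < p.1 then -1 else 1) * sgn σ p.1 :=
      sgn_erase hp2'
    rw [h1, h2]
    have : sgn σ p.1 * ((if p.1 < p.2 then (-1:ℝ) else 1) * sgn σ p.2)
        + sgn σ p.2 * ((if p.2 < p.1 then -1 else 1) * sgn σ p.1)
        = (sgn σ p.1 * sgn σ p.2) *
            ((if p.1 < p.2 then (-1:ℝ) else 1) + (if p.2 < p.1 then -1 else 1)) := by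
      ring
    rw [this, eps_add hne, mul_zero, Finsupp.single_zero]
  · intro p hp _
    obtain ⟨_, hp2⟩ := Finset.mem_sigma.1 hp
    have hne : p.2 ≠ p.1 := (Finset.mem_erase.1 hp2).1
    intro hcontra
    exact hne (congrArg Sigma.fst hcontra)
  · intro p hp
    obtain ⟨hp1, hp2⟩ := Finset.mem_sigma.1 hp
    exact Finset.mem_sigma.2 ⟨Finset.erase_subset _ _ hp2,
      Finset.mem_erase.2 ⟨fun h => (Finset.mem_erase.1 hp2).1 h.symm, hp1⟩⟩
  · intro p hp
    rfl

lemma bdryHom_support {c : Finset X →₀ ℝ} {σ' : Finset X}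
    (h : σ' ∈ (bdryHom c).support) :
    ∃ σ ∈ c.support, ∃ x ∈ σ, σ' = σ.erase x := by
  classical
  rw [bdryHom, Finsupp.lsum_apply] at h
  have h1 := Finsupp.support_sum h
  obtain ⟨σ, hσ, h2⟩ := Finset.mem_biUnion.1 h1
  refine ⟨σ, hσ, ?_⟩
  have h3 : σ' ∈ (Bop σ).support := by
    have := Finsupp.support_smul (b := c σ) (g := Bop σ)
    simp only [LinearMap.toSpanSingleton_apply] at h2
    exact this h2
  rw [Bop] at h3
  have h4 := Finsupp.support_finset_sum h3
  obtain ⟨x, hx, h5⟩ := Finset.mem_biUnion.1 h4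
  exact ⟨x, hx, Finset.mem_singleton.1 (Finsupp.support_single_subset h5)⟩

lemma coneHom_support {w : X} {c : Finset X →₀ ℝ} {σ' : Finset X}
    (h : σ' ∈ (coneHom w c).support) :
    ∃ σ ∈ c.support, w ∉ σ ∧ σ' = insert w σ := by
  classical
  rw [coneHom, Finsupp.lsum_apply] at h
  have h1 := Finsupp.support_sum h
  obtain ⟨σ, hσ, h2⟩ := Finset.mem_biUnion.1 h1
  refine ⟨σ, hσ, ?_⟩
  have h3 : σ' ∈ (coneVal w σ).support := by
    have := Finsupp.support_smul (b := c σ) (g := coneVal w σ)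
    simp only [LinearMap.toSpanSingleton_apply] at h2
    exact this h2
  rw [coneVal] at h3
  by_cases hw : w ∈ σ
  · rw [if_pos hw] at h3; simp at h3
  · rw [if_neg hw] at h3
    exact ⟨hw, Finset.mem_singleton.1 (Finsupp.support_single_subset h3)⟩


lemma main_vanish :
    ∀ (j : ℕ) (S : Fin j → Set X) (n : ℕ), j ≤ n + 1 →
      ∀ c : Finset X →₀ ℝ,
        (∀ σ ∈ c.support, (∃ i, (↑σ : Set X) ⊆ S i) ∧ σ.card = n + 1) →
        bdryHom c = 0 →
        ∃ b : Finset X →₀ ℝ,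
          (∀ σ ∈ b.support, (∃ i, (↑σ : Set X) ⊆ S i) ∧ σ.card = n + 2) ∧ bdryHom b = c := by
  intro j
  induction j with
  | zero =>
    intro S n _ c hc _
    have hc0 : c = 0 := by
      apply Finsupp.support_eq_empty.1
      apply Finset.eq_empty_iff_forall_notMem.2
      intro σ hσ
      obtain ⟨⟨i, _⟩, _⟩ := hc σ hσ
      exact i.elim0
    exact ⟨0, by simp, by rw [hc0, map_zero]⟩
  | succ j IH =>
    intro S n hjn c hc hcyc
    classical
    set p : Finset X → Prop := fun σ => ∃ i : Fin j, (↑σ : Set X) ⊆ S i.castSucc with hpdef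
    set cU := c.filter p with hcU
    set cV := c.filter (fun σ => ¬ p σ) with hcV
    have hsplit : cU + cV = c := Finsupp.filter_pos_add_filter_neg c p
    have hUsub : cU.support ⊆ c.support := by
      rw [hcU, Finsupp.support_filter]; exact Finset.filter_subset _ _
    have hVsub : cV.support ⊆ c.support := by
      rw [hcV, Finsupp.support_filter]; exact Finset.filter_subset _ _
    have hUP : ∀ σ ∈ cU.support, p σ := by
      rw [hcU, Finsupp.support_filter]
      intro σ hσ; exact (Finset.mem_filter.1 hσ).2
    have hVlast : ∀ σ ∈ cV.support, (↑σ : Set X) ⊆ S (Fin.last j) := by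
      intro σ hσ
      have hnp : ¬ p σ := by
        rw [hcV, Finsupp.support_filter] at hσ
        exact (Finset.mem_filter.1 hσ).2
      obtain ⟨⟨i, hi⟩, _⟩ := hc σ (hVsub hσ)
      rcases Fin.eq_castSucc_or_eq_last i with ⟨i', rfl⟩ | rfl
      · exact absurd ⟨i', hi⟩ hnp
      · exact hi
    have hzcyc : bdryHom (bdryHom cU) = 0 := by
      have := LinearMap.congr_fun (bdry_bdry (X := X)) cU
      simpa using this
    have hbVU : bdryHom cU = - bdryHom cV := by
      have h0 : bdryHom (cU + cV) = 0 := by rw [hsplit]; exact hcyc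
      rw [map_add] at h0
      exact eq_neg_of_add_eq_zero_left h0
    have hzsupp : ∀ σ' ∈ (bdryHom cU).support,
        (∃ i : Fin j, (↑σ' : Set X) ⊆ S i.castSucc ∩ S (Fin.last j)) ∧ σ'.card = n := by
      intro σ' hσ'
      obtain ⟨σ, hσ, x, hx, rfl⟩ := bdryHom_support hσ'
      have hcard : σ.card = n + 1 := (hc σ (hUsub hσ)).2
      have h2 : (↑(σ.erase x) : Set X) ⊆ S (Fin.last j) := by
        have hσ'' : σ.erase x ∈ (bdryHom cV).support := by
          rw [← Finsupp.support_neg, ← hbVU]; exact hσ'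
        obtain ⟨τ, hτ, y, hy, he⟩ := bdryHom_support hσ''
        rw [he]
        exact Set.Subset.trans (by exact_mod_cast Finset.coe_subset.2 (Finset.erase_subset _ _))
          (hVlast τ hτ)
      obtain ⟨i, hi⟩ := hUP σ hσ
      refine ⟨⟨i, Set.subset_inter ?_ h2⟩, ?_⟩
      · exact Set.Subset.trans (by exact_mod_cast Finset.coe_subset.2 (Finset.erase_subset _ _)) hi
      · rw [Finset.card_erase_of_mem hx, hcard]; omega
    have hdex : ∃ d : Finset X →₀ ℝ,
        (∀ σ ∈ d.support,
          (∃ i : Fin j, (↑σ : Set X) ⊆ S i.castSucc ∩ S (Fin.last j)) ∧ σ.card = n + 1) ∧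
        bdryHom d = bdryHom cU := by
      rcases Nat.eq_zero_or_pos n with hn0 | hnpos
      · have hj0 : j = 0 := by omega
        have hcU0 : cU = 0 := by
          apply Finsupp.support_eq_empty.1
          apply Finset.eq_empty_iff_forall_notMem.2
          intro σ hσ
          obtain ⟨i, _⟩ := hUP σ hσ
          exact absurd i.pos (by omega)
        exact ⟨0, by simp, by rw [hcU0]⟩
      · obtain ⟨n', rfl⟩ : ∃ n', n = n' + 1 := ⟨n - 1, by omega⟩
        obtain ⟨d, hd1, hd2⟩ := IH (fun i => S i.castSucc ∩ S (Fin.last j)) n' (by omega)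
          (bdryHom cU) (fun σ' h' => hzsupp σ' h') hzcyc
        exact ⟨d, hd1, hd2⟩
    obtain ⟨d, hd1, hd2⟩ := hdex
    obtain ⟨b₁, hb₁s, hb₁⟩ := IH (fun i => S i.castSucc) n (by omega) (cU - d)
      (by
        intro σ hσ
        have hmem := Finsupp.support_sub (f := cU) (g := d) hσ
        rcases Finset.mem_union.1 hmem with hσ' | hσ'
        · obtain ⟨i, hi⟩ := hUP σ hσ'
          exact ⟨⟨i, hi⟩, (hc σ (hUsub hσ')).2⟩
        · obtain ⟨⟨i, hi⟩, hci⟩ := hd1 σ hσ'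
          exact ⟨⟨i, hi.trans Set.inter_subset_left⟩, hci⟩)
      (by rw [map_sub, hd2, sub_self])
    have hcVd_supp : ∀ σ ∈ (cV + d).support,
        (↑σ : Set X) ⊆ S (Fin.last j) ∧ σ.card = n + 1 := by
      intro σ hσ
      rcases Finset.mem_union.1 (Finsupp.support_add hσ) with hσ' | hσ'
      · exact ⟨hVlast σ hσ', (hc σ (hVsub hσ')).2⟩
      · obtain ⟨⟨i, hi⟩, hci⟩ := hd1 σ hσ'
        exact ⟨hi.trans Set.inter_subset_right, hci⟩
    have hcVd_cyc : bdryHom (cV + d) = 0 := by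
      rw [map_add, hd2, ← map_add, add_comm cV cU, hsplit, hcyc]
    rcases eq_or_ne (cV + d) 0 with h0 | h0
    · refine ⟨b₁, ?_, ?_⟩
      · intro σ hσ
        obtain ⟨⟨i, hi⟩, hci⟩ := hb₁s σ hσ
        exact ⟨⟨i.castSucc, hi⟩, hci⟩
      · rw [hb₁, ← hsplit, eq_neg_of_add_eq_zero_left h0]
        abel
    · obtain ⟨σ₀, hσ₀⟩ := Finsupp.support_nonempty_iff.2 h0
      obtain ⟨hσ₀S, hσ₀c⟩ := hcVd_supp σ₀ hσ₀
      obtain ⟨w, hwmem⟩ : σ₀.Nonempty := Finset.card_pos.1 (by rw [hσ₀c]; omega)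
      have hwS : w ∈ S (Fin.last j) := hσ₀S (by exact_mod_cast hwmem)
      have hb₂ : bdryHom (coneHom w (cV + d)) = cV + d := by
        have hh := LinearMap.congr_fun (cone_homotopy (X := X) w) (cV + d)
        simp only [LinearMap.add_apply, LinearMap.comp_apply, LinearMap.id_apply] at hh
        rw [hcVd_cyc, map_zero, add_zero] at hh
        exact hh
      have hb₂s : ∀ σ ∈ (coneHom w (cV + d)).support,
          ((↑σ : Set X) ⊆ S (Fin.last j)) ∧ σ.card = n + 2 := by
        intro σ hσ
        obtain ⟨τ, hτ, hwτ, rfl⟩ := coneHom_support hσ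
        obtain ⟨hτS, hτc⟩ := hcVd_supp τ hτ
        constructor
        · intro A hA
          rcases Finset.mem_insert.1 (by exact_mod_cast hA) with rfl | hA'
          · exact hwS
          · exact hτS (by exact_mod_cast hA')
        · rw [Finset.card_insert_of_notMem hwτ, hτc]
      refine ⟨b₁ + coneHom w (cV + d), ?_, ?_⟩
      · intro σ hσ
        rcases Finset.mem_union.1 (Finsupp.support_add hσ) with hσ' | hσ'
        · obtain ⟨⟨i, hi⟩, hci⟩ := hb₁s σ hσ'
          exact ⟨⟨i.castSucc, hi⟩, hci⟩
        · obtain ⟨hi, hci⟩ := hb₂s σ hσ'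
          exact ⟨⟨Fin.last j, hi⟩, hci⟩
      · rw [map_add, hb₁, hb₂, ← hsplit]
        abel

lemma chain_reach {Y : Type*} {E : Y → Y → Prop} (s : Setoid Y) :
    ∀ (l : List Y) (a : Y), (a :: l).Chain' E →
      ∀ x ∈ a :: l,
        Relation.ReflTransGen (quotientEdgeRel E s) (Quotient.mk s a) (Quotient.mk s x) := by
  intro l
  induction l with
  | nil =>
    intro a _ x hx
    rw [List.mem_singleton] at hx; subst hx; exact .refl
  | cons b l ih =>
    intro a hch x hx
    have hab : E a b := (List.isChain_cons_cons.1 hch).1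
    have hch' : (b :: l).Chain' E := (List.isChain_cons_cons.1 hch).2
    rcases List.mem_cons.1 hx with rfl | hx'
    · exact .refl
    · have hbx := ih b hch' x hx'
      have hstep : Relation.ReflTransGen (quotientEdgeRel E s)
          (Quotient.mk s a) (Quotient.mk s b) := by
        by_cases he : Quotient.mk s a = Quotient.mk s b
        · rw [he]
        · exact Relation.ReflTransGen.single ⟨he, a, b, rfl, rfl, hab⟩
      exact hstep.trans hbx

end AuxDowker

/-- Let G be a disjoint union of directed path graphs (vertex type Σ i, Fin (m i),
with edges going from each vertex to its successor within a component), π a vertex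
partition, and h a set of k > 1 directed paths of G whose vertices meet every cell.
Then the path completion of the quotient graph admits a source dominating set of
size at most k, and the maximal Dowker source complex of the quotient has trivial
reduced homology in all dimensions ≥ k - 1. -/
theorem disjoint_paths_quotient_dominating_and_homology
    {ι : Type*} [Fintype ι] [DecidableEq ι] (m : ι → ℕ)
    (E : (Σ i : ι, Fin (m i)) → (Σ i : ι, Fin (m i)) → Prop)
    (hE : ∀ u v : Σ i : ι, Fin (m i), E u v ↔ u.1 = v.1 ∧ (v.2 : ℕ) = (u.2 : ℕ) + 1)
    (s : Setoid (Σ i : ι, Fin (m i)))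
    (h : Finset (List (Σ i : ι, Fin (m i)))) (k : ℕ) (hk : 1 < k) (hcard : h.card = k)
    (hwalks : ∀ p ∈ h, p ≠ [] ∧ p.Chain' E)
    (hspan : ∀ A : Quotient s, ∃ p ∈ h, ∃ x ∈ p, Quotient.mk s x = A) :
    (∃ K : Finset (Quotient s), K.card ≤ k ∧
        ∀ A : Quotient s, ∃ B ∈ K, Relation.ReflTransGen (quotientEdgeRel E s) B A) ∧
      ∀ L : LinearOrder (Quotient s), ∀ n : ℕ, k - 1 ≤ n →
        ∀ c : Finset (Quotient s) →₀ ℝ,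
          (∀ σ ∈ c.support,
              (∃ v : Quotient s, ∀ A ∈ σ, Relation.ReflTransGen (quotientEdgeRel E s) v A) ∧
                σ.card = n + 1) →
          @bdry _ L c = 0 →
          ∃ b : Finset (Quotient s) →₀ ℝ,
            (∀ σ ∈ b.support,
                (∃ v : Quotient s, ∀ A ∈ σ, Relation.ReflTransGen (quotientEdgeRel E s) v A) ∧
                  σ.card = n + 2) ∧
              @bdry _ L b = c := by
  classical
  have hKdef : ∃ K : Finset (Quotient s), K.card ≤ k ∧
      ∀ A : Quotient s, ∃ B ∈ K, Relation.ReflTransGen (quotientEdgeRel E s) B A := by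
    refine ⟨h.attach.image fun q => Quotient.mk s (q.1.head (hwalks q.1 q.2).1), ?_, ?_⟩
    · exact le_trans Finset.card_image_le (by rw [Finset.card_attach, hcard])
    · intro A
      obtain ⟨q, hq, x, hxq, hxA⟩ := hspan A
      refine ⟨Quotient.mk s (q.head (hwalks q hq).1),
        Finset.mem_image.2 ⟨⟨q, hq⟩, Finset.mem_attach _ _, rfl⟩, ?_⟩
      subst hxA
      have hne := (hwalks q hq).1
      have hch : (q.head hne :: q.tail).Chain' E := by
        rw [List.cons_head_tail]; exact (hwalks q hq).2
      exact chain_reach s q.tail (q.head hne) hch x (by rw [List.cons_head_tail]; exact hxq)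
  obtain ⟨K, hKc, hKdom⟩ := hKdef
  refine ⟨⟨K, hKc, hKdom⟩, ?_⟩
  intro L n hkn c hc hcyc
  have hkn' : K.card ≤ n + 1 := le_trans hKc (by omega)
  set e := K.equivFin with he
  obtain ⟨b, hbs, hbb⟩ := main_vanish (X := Quotient s) K.card
    (fun i => {A | Relation.ReflTransGen (quotientEdgeRel E s) ↑(e.symm i) A}) n hkn' c
    (by
      intro σ hσ
      obtain ⟨⟨v, hv⟩, hcc⟩ := hc σ hσ
      obtain ⟨B, hB, hBv⟩ := hKdom v
      refine ⟨⟨e ⟨B, hB⟩, ?_⟩, hcc⟩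
      intro A hA
      simp only [Set.mem_setOf_eq, Equiv.symm_apply_apply]
      exact hBv.trans (hv A (by exact_mod_cast hA)))
    (by rw [← bdry_eq]; exact hcyc)
  refine ⟨b, ?_, by rw [bdry_eq]; exact hbb⟩
  intro σ hσ
  obtain ⟨⟨i, hi⟩, hcc⟩ := hbs σ hσ
  exact ⟨⟨↑(e.symm i), fun A hA => hi (Finset.mem_coe.2 hA)⟩, hcc⟩
end
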